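/- Assume Situation (*): d > 0 and 2 ≤ e_1 ≤ e_2 ≤ e_3 ≤ e_4 ≤ d with 2d − 2 = Σ_{i=1}^4 (e_i − 1), and let (σ_1, σ_2, σ_3, σ_4) be a Hurwitz factorization for (d, 4, 0, (e_1, e_2, e_3, e_4)). Then σ_3 and σ_4 are not disjoint; the set S given by the intersection of the supports of σ_3, σ_4 and σ_3σ_4 has at most 2 elements; the number of cycles in the decomposition of σ_3σ_4 into disjoint cycles equals the cardinality of S; and the support of each of these disjoint cycles contains exactly one element of S. -/

import Mathlib

open Equiv Equiv.Perm Finset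

section Aux

variable {G : Type*} [DecidableEq G] [Fintype G]

/-- A nonempty subset of the support of a cycle that is closed under the cycle is the
whole support. -/
lemma aux_invariant {γ : Equiv.Perm G} (hγ : γ.IsCycle) {P : Finset G} (hP : P.Nonempty)
    (hPs : P ⊆ γ.support) (hcl : ∀ z ∈ P, γ z ∈ P) : P = γ.support := by
  obtain ⟨x, hx⟩ := hP
  have hpow : ∀ n : ℕ, (γ ^ n) x ∈ P := by
    intro n
    induction n with
    | zero => simpa using hx
    | succ n ih =>
      rw [pow_succ', Equiv.Perm.mul_apply]
      exact hcl _ ih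
  refine subset_antisymm hPs fun y hy => ?_
  have hsc : γ.SameCycle x y :=
    hγ.sameCycle (mem_support.mp (hPs hx)) (mem_support.mp hy)
  obtain ⟨i, -, hi⟩ := hsc.exists_pow_eq'
  rw [← hi]
  exact hpow i

/-- A point of the union of the supports fixed by the product lies in both supports. -/
lemma aux_fixed {a b : Equiv.Perm G} {z : G} (hz : z ∈ a.support ∪ b.support)
    (hfix : (a * b) z = z) : z ∈ a.support ∩ b.support := by
  rw [Equiv.Perm.mul_apply] at hfix
  rw [mem_union, mem_support, mem_support] at hz
  rw [mem_inter, mem_support, mem_support]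
  by_cases hbz : b z = z
  · rw [hbz] at hfix
    tauto
  · refine ⟨fun haz => ?_, hbz⟩
    have : a (b z) = a z := by rw [hfix, haz]
    exact hbz (a.injective this)

/-- Every cycle of the product of two cycles with intersecting supports meets the
intersection of the supports. -/
lemma aux_cycle_meets {a b : Equiv.Perm G} (ha : a.IsCycle) (hb : b.IsCycle)
    (hM : (a.support ∩ b.support).Nonempty) {c : Equiv.Perm G}
    (hc : c ∈ (a * b).cycleFactorsFinset) :
    (c.support ∩ (a.support ∩ b.support)).Nonempty := by
  by_contra hcon
  rw [Finset.not_nonempty_iff_eq_empty, Finset.eq_empty_iff_forall_notMem] at hcon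
  have hnotM : ∀ z ∈ c.support, z ∉ a.support ∩ b.support := by
    intro z hz hzM
    exact hcon z (mem_inter.mpr ⟨hz, hzM⟩)
  obtain ⟨hcyc, hagree⟩ := Equiv.Perm.mem_cycleFactorsFinset_iff.mp hc
  have hsub : c.support ⊆ (a * b).support := Equiv.Perm.mem_cycleFactorsFinset_support_le hc
  by_cases hP : (c.support ∩ a.support).Nonempty
  · have h1 : ∀ z ∈ c.support ∩ a.support, c z ∈ c.support ∩ a.support := by
      intro z hz
      obtain ⟨hz1, hz2⟩ := mem_inter.mp hz
      have hznb : z ∉ b.support := fun hzb => hnotM z hz1 (mem_inter.mpr ⟨hz2, hzb⟩)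
      have hbz : b z = z := notMem_support.mp hznb
      have hcz : c z = a z := by rw [hagree z hz1, Equiv.Perm.mul_apply, hbz]
      refine mem_inter.mpr ⟨apply_mem_support.mpr hz1, ?_⟩
      rw [hcz]
      exact apply_mem_support.mpr hz2
    have hPeq := aux_invariant hcyc hP inter_subset_left h1
    have hca : c.support ⊆ a.support := by
      intro z hz
      rw [← hPeq] at hz
      exact (mem_inter.mp hz).2
    have h2 : ∀ z ∈ c.support, a z ∈ c.support := by
      intro z hz
      have hznb : z ∉ b.support := fun hzb => hnotM z hz (mem_inter.mpr ⟨hca hz, hzb⟩)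
      have hbz : b z = z := notMem_support.mp hznb
      have : a z = c z := by rw [hagree z hz, Equiv.Perm.mul_apply, hbz]
      rw [this]
      exact apply_mem_support.mpr hz
    have hceq := aux_invariant ha hcyc.nonempty_support hca h2
    obtain ⟨w, hw⟩ := hM
    refine hcon w (mem_inter.mpr ⟨?_, hw⟩)
    rw [hceq]
    exact (mem_inter.mp hw).1
  · rw [Finset.not_nonempty_iff_eq_empty, Finset.eq_empty_iff_forall_notMem] at hP
    have hcb : c.support ⊆ b.support := by
      intro z hz
      have := support_mul_le a b (hsub hz)
      rcases mem_union.mp this with h | h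
      · exact absurd (mem_inter.mpr ⟨hz, h⟩) (hP z)
      · exact h
    have h2 : ∀ z ∈ c.support, b z ∈ c.support := by
      intro z hz
      have hczc : c z ∈ c.support := apply_mem_support.mpr hz
      have hcz : c z = a (b z) := by rw [hagree z hz, Equiv.Perm.mul_apply]
      have hbza : b z ∉ a.support := by
        intro hba
        have : a (b z) ∈ a.support := apply_mem_support.mpr hba
        rw [← hcz] at this
        exact hP (c z) (mem_inter.mpr ⟨hczc, this⟩)
      have : c z = b z := by rw [hcz, notMem_support.mp hbza]
      rw [← this]
      exact hczc
    have hceq := aux_invariant hb hcyc.nonempty_support hcb h2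
    obtain ⟨w, hw⟩ := hM
    refine hcon w (mem_inter.mpr ⟨?_, hw⟩)
    rw [hceq]
    exact (mem_inter.mp hw).2

/-- The basic counting identity for the product of two permutations. -/
lemma aux_count (a b : Equiv.Perm G) :
    ((a.support ∩ b.support) ∩ (a * b).support).card + (a.support ∪ b.support).card
      = (a.support ∩ b.support).card + (a * b).support.card := by
  set M := a.support ∩ b.support with hMdef
  set U := a.support ∪ b.support with hUdef
  set T := (a * b).support with hTdef
  have hTU : T ⊆ U := support_mul_le a b
  have hMU : M ⊆ U := inter_subset_left.trans subset_union_left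
  have hMT : M \ T = U \ T := by
    apply subset_antisymm
    · exact sdiff_subset_sdiff hMU le_rfl
    · intro z hz
      obtain ⟨hzU, hzT⟩ := mem_sdiff.mp hz
      have : (a * b) z = z := by
        have := hzT
        rw [hTdef, mem_support] at this
        push_neg at this
        exact this
      exact mem_sdiff.mpr ⟨aux_fixed hzU this, hzT⟩
  have h1 : (U \ T).card + T.card = U.card := Finset.card_sdiff_add_card_eq_card hTU
  have h2 : (M ∩ T).card + (M \ T).card = M.card := Finset.card_inter_add_card_sdiff M T
  have h3 : (M \ T).card = (U \ T).card := by rw [hMT]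
  omega

/-- Counting the cycles of `f` through a subset of the support meeting every cycle. -/
lemma aux_card_le {f : Equiv.Perm G} {S : Finset G}
    (hne : ∀ c ∈ f.cycleFactorsFinset, (c.support ∩ S).Nonempty) :
    f.cycleFactorsFinset.card ≤ S.card := by
  classical
  have hdisj : ∀ c ∈ f.cycleFactorsFinset, ∀ c' ∈ f.cycleFactorsFinset, c ≠ c' →
      Disjoint (c.support ∩ S) (c'.support ∩ S) := by
    intro c hc c' hc' hne'
    have := (Equiv.Perm.cycleFactorsFinset_pairwise_disjoint f) hc hc' hne'
    exact Disjoint.mono inter_subset_left inter_subset_left this.disjoint_support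
  have hbu : (f.cycleFactorsFinset.biUnion fun c => c.support ∩ S) ⊆ S := by
    intro x hx
    obtain ⟨c, -, hx⟩ := Finset.mem_biUnion.mp hx
    exact (mem_inter.mp hx).2
  calc f.cycleFactorsFinset.card = ∑ _c ∈ f.cycleFactorsFinset, 1 := by simp
    _ ≤ ∑ c ∈ f.cycleFactorsFinset, (c.support ∩ S).card := by
        refine Finset.sum_le_sum fun c hc => ?_
        exact Nat.one_le_iff_ne_zero.mpr (Finset.card_ne_zero_of_mem (hne c hc).choose_spec)
    _ = (f.cycleFactorsFinset.biUnion fun c => c.support ∩ S).card :=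
        (Finset.card_biUnion hdisj).symm
    _ ≤ S.card := Finset.card_le_card hbu

/-- If a subset of the support meets every cycle and has as many elements as there are
cycles, it meets every cycle exactly once. -/
lemma aux_each_one {f : Equiv.Perm G} {S : Finset G} (hS : S ⊆ f.support)
    (hne : ∀ c ∈ f.cycleFactorsFinset, (c.support ∩ S).Nonempty)
    (hcard : f.cycleFactorsFinset.card = S.card) :
    ∀ c ∈ f.cycleFactorsFinset, (c.support ∩ S).card = 1 := by
  classical
  have hdisj : ∀ c ∈ f.cycleFactorsFinset, ∀ c' ∈ f.cycleFactorsFinset, c ≠ c' →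
      Disjoint (c.support ∩ S) (c'.support ∩ S) := by
    intro c hc c' hc' hne'
    have := (Equiv.Perm.cycleFactorsFinset_pairwise_disjoint f) hc hc' hne'
    exact Disjoint.mono inter_subset_left inter_subset_left this.disjoint_support
  have hbu : (f.cycleFactorsFinset.biUnion fun c => c.support ∩ S) = S := by
    apply subset_antisymm
    · intro x hx
      obtain ⟨c, -, hx⟩ := Finset.mem_biUnion.mp hx
      exact (mem_inter.mp hx).2
    · intro x hx
      have hxs : x ∈ f.support := hS hx
      refine Finset.mem_biUnion.mpr ⟨f.cycleOf x, ?_, ?_⟩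
      · exact Equiv.Perm.cycleOf_mem_cycleFactorsFinset_iff.mpr hxs
      · refine mem_inter.mpr ⟨?_, hx⟩
        rw [Equiv.Perm.mem_support_cycleOf_iff]
        exact ⟨Equiv.Perm.SameCycle.refl _ _, hxs⟩
  have hsum : ∑ c ∈ f.cycleFactorsFinset, (c.support ∩ S).card = S.card := by
    rw [← Finset.card_biUnion hdisj, hbu]
  have hone : ∀ c ∈ f.cycleFactorsFinset, 1 ≤ (c.support ∩ S).card := fun c hc =>
    Nat.one_le_iff_ne_zero.mpr (Finset.card_ne_zero_of_mem (hne c hc).choose_spec)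
  by_contra hcon
  push_neg at hcon
  obtain ⟨c0, hc0, hc0ne⟩ := hcon
  have hlt : ∑ _c ∈ f.cycleFactorsFinset, 1 <
      ∑ c ∈ f.cycleFactorsFinset, (c.support ∩ S).card := by
    refine Finset.sum_lt_sum hone ⟨c0, hc0, ?_⟩
    have := hone c0 hc0
    omega
  rw [hsum] at hlt
  simp only [Finset.sum_const, smul_eq_mul, mul_one] at hlt
  omega

end Aux

/-- A Hurwitz factorization for `(d, r, 0, (e 0, …, e (r-1)))`. -/
def HurwitzFactorization (d r : ℕ) (e : Fin r → ℕ)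
    (σ : Fin r → Equiv.Perm (Fin d)) : Prop :=
  (∀ i, (σ i).IsCycle ∧ (σ i).support.card = e i) ∧
  (List.ofFn σ).prod = 1 ∧
  ∀ x y : Fin d, ∃ g ∈ Subgroup.closure (Set.range σ), g x = y

/-- In Situation (*), for a Hurwitz factorization `(σ₁, σ₂, σ₃, σ₄)` for
`(d, 4, 0, (e₁, e₂, e₃, e₄))`: `σ₃` and `σ₄` are not disjoint; the set `S` of points
in the supports of `σ₃`, `σ₄` and `σ₃σ₄` has at most two elements; the number of
disjoint cycles of `σ₃σ₄` equals the cardinality of `S`; and the support of each of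
these cycles contains exactly one element of `S`. -/
theorem hurwitz_four_sigma34_cycle_structure
    (d e1 e2 e3 e4 : ℕ) (hd : 0 < d)
    (h1 : 2 ≤ e1) (h12 : e1 ≤ e2) (h23 : e2 ≤ e3) (h34 : e3 ≤ e4) (h4d : e4 ≤ d)
    (hsum : 2 * d - 2 = (e1 - 1) + (e2 - 1) + (e3 - 1) + (e4 - 1))
    (σ : Fin 4 → Equiv.Perm (Fin d))
    (hσ : HurwitzFactorization d 4 ![e1, e2, e3, e4] σ) :
    ¬Disjoint (σ 2).support (σ 3).support ∧
    ((σ 2).support ∩ (σ 3).support ∩ (σ 2 * σ 3).support).card ≤ 2 ∧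
    (σ 2 * σ 3).cycleFactorsFinset.card =
      ((σ 2).support ∩ (σ 3).support ∩ (σ 2 * σ 3).support).card ∧
    ∀ c ∈ (σ 2 * σ 3).cycleFactorsFinset,
      (c.support ∩ ((σ 2).support ∩ (σ 3).support ∩ (σ 2 * σ 3).support)).card = 1 := by
  obtain ⟨hcycs, hprod, htrans⟩ := hσ
  have hcy0 : (σ 0).IsCycle := (hcycs 0).1
  have hcy1 : (σ 1).IsCycle := (hcycs 1).1
  have hcy2 : (σ 2).IsCycle := (hcycs 2).1
  have hcy3 : (σ 3).IsCycle := (hcycs 3).1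
  have hcard0 : (σ 0).support.card = e1 := by simpa using (hcycs 0).2
  have hcard1 : (σ 1).support.card = e2 := by simpa using (hcycs 1).2
  have hcard2 : (σ 2).support.card = e3 := by simpa using (hcycs 2).2
  have hcard3 : (σ 3).support.card = e4 := by simpa using (hcycs 3).2
  have hp : σ 0 * (σ 1 * (σ 2 * σ 3)) = 1 := by
    have := hprod
    simpa [List.ofFn_succ, mul_assoc] using this
  have hp2 : (σ 0 * σ 1) * (σ 2 * σ 3) = 1 := by rw [mul_assoc]; exact hp
  have hτ12 : σ 2 * σ 3 = (σ 1)⁻¹ * (σ 0)⁻¹ := by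
    rw [← mul_inv_rev]
    exact (inv_eq_of_mul_eq_one_right hp2).symm
  set A : Finset (Fin d) := (σ 2).support with hA
  set B : Finset (Fin d) := (σ 3).support with hB
  set A' : Finset (Fin d) := (σ 1).support with hA'
  set B' : Finset (Fin d) := (σ 0).support with hB'
  set T : Finset (Fin d) := (σ 2 * σ 3).support with hT
  have hden : 2 ≤ d := le_trans (le_trans h1 (le_trans h12 (le_trans h23 h34))) h4d
  -- the supports cover everything
  have huniv : (A ∪ B) ∪ (A' ∪ B') = Finset.univ := by
    rw [Finset.eq_univ_iff_forall]
    intro z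
    by_contra hz
    simp only [Finset.mem_union, not_or] at hz
    obtain ⟨⟨hzA, hzB⟩, hzA', hzB'⟩ := hz
    have hfix : ∀ i : Fin 4, σ i z = z := by
      intro i
      fin_cases i
      · exact Equiv.Perm.notMem_support.mp hzB'
      · exact Equiv.Perm.notMem_support.mp hzA'
      · exact Equiv.Perm.notMem_support.mp hzA
      · exact Equiv.Perm.notMem_support.mp hzB
    have hcl : ∀ g ∈ Subgroup.closure (Set.range σ), g z = z := by
      intro g hg
      induction hg using Subgroup.closure_induction with
      | mem x hx => obtain ⟨i, rfl⟩ := hx; exact hfix i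
      | one => rfl
      | mul x y hx hy ihx ihy => rw [Equiv.Perm.mul_apply, ihy, ihx]
      | inv x hx ih => nth_rewrite 1 [← ih]; exact x.symm_apply_apply z
    obtain ⟨y, hy⟩ := Fintype.exists_ne_of_one_lt_card (by rw [Fintype.card_fin]; omega) z
    obtain ⟨g, hg, hgz⟩ := htrans z y
    exact hy (by rw [← hgz, hcl g hg])
  -- counting facts
  have c1 : (A ∪ B).card + (A ∩ B).card = e3 + e4 := by
    rw [Finset.card_union_add_card_inter, hcard2, hcard3]
  have c2 : (A' ∪ B').card + (A' ∩ B').card = e2 + e1 := by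
    rw [Finset.card_union_add_card_inter, hcard1, hcard0]
  have c3 : T ⊆ A ∪ B := Equiv.Perm.support_mul_le (σ 2) (σ 3)
  have c4 : T ⊆ A' ∪ B' := by
    intro x hx
    rw [hT, hτ12] at hx
    have := Equiv.Perm.support_mul_le ((σ 1)⁻¹) ((σ 0)⁻¹) hx
    rwa [Equiv.Perm.support_inv, Equiv.Perm.support_inv] at this
  have c5 : ((A ∪ B) ∪ (A' ∪ B')).card = d := by rw [huniv]; simp
  have c6 : ((A ∪ B) ∪ (A' ∪ B')).card + ((A ∪ B) ∩ (A' ∪ B')).card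
      = (A ∪ B).card + (A' ∪ B').card := Finset.card_union_add_card_inter _ _
  have c7 : T.card ≤ ((A ∪ B) ∩ (A' ∪ B')).card :=
    Finset.card_le_card (Finset.subset_inter c3 c4)
  have c8 : ((A ∩ B) ∩ T).card + (A ∪ B).card = (A ∩ B).card + T.card :=
    aux_count (σ 2) (σ 3)
  have c9 : ((A' ∩ B') ∩ T).card + (A' ∪ B').card = (A' ∩ B').card + T.card := by
    have := aux_count ((σ 1)⁻¹) ((σ 0)⁻¹)
    rw [← hτ12] at this
    simpa [Equiv.Perm.support_inv] using this
  have hsum2 : e1 + e2 + e3 + e4 = 2 * d + 2 := by omega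
  have hSS' : ((A ∩ B) ∩ T).card + ((A' ∩ B') ∩ T).card ≤ 2 := by omega
  -- claim 1 : A ∩ B nonempty
  have hMne : (A ∩ B).Nonempty := by
    rw [Finset.nonempty_iff_ne_empty]
    intro hM
    have hdisj : (σ 2).Disjoint (σ 3) := by
      rw [Equiv.Perm.disjoint_iff_disjoint_support, Finset.disjoint_iff_inter_eq_empty]
      exact hM
    have hTAB : T = A ∪ B := hdisj.support_mul
    have hsubU' : A ∪ B ⊆ A' ∪ B' := by rw [← hTAB]; exact c4
    have hle : (A ∪ B).card ≤ (A' ∪ B').card := Finset.card_le_card hsubU'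
    have hU'univ : A' ∪ B' = Finset.univ := by
      rw [Finset.eq_univ_iff_forall]
      intro z
      have := (Finset.eq_univ_iff_forall.mp huniv) z
      rcases Finset.mem_union.mp this with h | h
      · exact hsubU' h
      · exact h
    have hU'card : (A' ∪ B').card = d := by rw [hU'univ]; simp
    have hMcard : (A ∩ B).card = 0 := by rw [hM]; simp
    omega
  -- the number of cycle factors
  have hkS : (σ 2 * σ 3).cycleFactorsFinset.card ≤ ((A ∩ B) ∩ T).card := by
    apply aux_card_le
    intro c hc
    obtain ⟨x, hx⟩ := aux_cycle_meets hcy2 hcy3 hMne hc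
    obtain ⟨hx1, hx2⟩ := Finset.mem_inter.mp hx
    exact ⟨x, Finset.mem_inter.mpr ⟨hx1, Finset.mem_inter.mpr
      ⟨hx2, Equiv.Perm.mem_cycleFactorsFinset_support_le hc hx1⟩⟩⟩
  have hmain : (σ 2 * σ 3).cycleFactorsFinset.card = ((A ∩ B) ∩ T).card := by
    by_cases hM' : (A' ∩ B').Nonempty
    · have hkS' : (σ 2 * σ 3).cycleFactorsFinset.card ≤ ((A' ∩ B') ∩ T).card := by
        apply aux_card_le
        intro c hc
        have hc' : c ∈ ((σ 1)⁻¹ * (σ 0)⁻¹).cycleFactorsFinset := by rwa [← hτ12]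
        have hM'' : (((σ 1)⁻¹).support ∩ ((σ 0)⁻¹).support).Nonempty := by
          simpa [Equiv.Perm.support_inv] using hM'
        obtain ⟨x, hx⟩ := aux_cycle_meets hcy1.inv hcy0.inv hM'' hc'
        rw [Equiv.Perm.support_inv, Equiv.Perm.support_inv] at hx
        obtain ⟨hx1, hx2⟩ := Finset.mem_inter.mp hx
        exact ⟨x, Finset.mem_inter.mpr ⟨hx1, Finset.mem_inter.mpr
          ⟨hx2, Equiv.Perm.mem_cycleFactorsFinset_support_le hc hx1⟩⟩⟩
      rcases Nat.eq_zero_or_pos (σ 2 * σ 3).cycleFactorsFinset.card with hk0 | hkpos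
      · have hone : σ 2 * σ 3 = 1 := by
          rw [← Equiv.Perm.cycleFactorsFinset_eq_empty_iff]
          exact Finset.card_eq_zero.mp hk0
        have hTe : T = ∅ := by rw [hT, hone]; simp
        rw [hk0, hTe]
        simp
      · omega
    · -- σ 1 and σ 0 have disjoint supports
      rw [Finset.not_nonempty_iff_eq_empty] at hM'
      have hdisj : ((σ 1)⁻¹).Disjoint ((σ 0)⁻¹) := by
        rw [Equiv.Perm.disjoint_iff_disjoint_support, Finset.disjoint_iff_inter_eq_empty]
        simpa [Equiv.Perm.support_inv] using hM'
      have hTU' : T = A' ∪ B' := by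
        rw [hT, hτ12, hdisj.support_mul]
        simp [Equiv.Perm.support_inv, hA', hB']
      have hne01 : (σ 1)⁻¹ ≠ (σ 0)⁻¹ := by
        intro h
        obtain ⟨x, hx⟩ := hcy1.inv.nonempty_support
        have : x ∈ ((σ 1)⁻¹).support ∩ ((σ 0)⁻¹).support :=
          Finset.mem_inter.mpr ⟨hx, h ▸ hx⟩
        rw [Equiv.Perm.support_inv, Equiv.Perm.support_inv] at this
        rw [hM'] at this
        simp at this
      have hk2 : (σ 2 * σ 3).cycleFactorsFinset.card = 2 := by
        rw [hτ12, hdisj.cycleFactorsFinset_mul_eq_union,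
          hcy1.inv.cycleFactorsFinset_eq_singleton,
          hcy0.inv.cycleFactorsFinset_eq_singleton]
        rw [Finset.card_union_of_disjoint (by simpa [eq_comm] using hne01)]
        simp
      -- A ∪ B = univ
      have hsubU : A' ∪ B' ⊆ A ∪ B := by rw [← hTU']; exact c3
      have hUuniv : A ∪ B = Finset.univ := by
        rw [Finset.eq_univ_iff_forall]
        intro z
        have := (Finset.eq_univ_iff_forall.mp huniv) z
        rcases Finset.mem_union.mp this with h | h
        · exact h
        · exact hsubU h
      have hUcard : (A ∪ B).card = d := by rw [hUuniv]; simp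
      have hM'card : (A' ∩ B').card = 0 := by rw [hM']; simp
      have hTcard : T.card = (A' ∪ B').card := by rw [hTU']
      omega
  refine ⟨?_, by omega, hmain, ?_⟩
  · rw [Finset.disjoint_iff_inter_eq_empty]
    intro h
    rw [h] at hMne
    simp [Finset.nonempty_iff_ne_empty] at hMne
  · intro c hc
    have hres : (c.support ∩ ((A ∩ B) ∩ T)).card = 1 := by
      apply aux_each_one (f := σ 2 * σ 3) (S := (A ∩ B) ∩ T) Finset.inter_subset_right
        ?_ hmain c hc
      intro c' hc'
      obtain ⟨x, hx⟩ := aux_cycle_meets hcy2 hcy3 hMne hc'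
      obtain ⟨hx1, hx2⟩ := Finset.mem_inter.mp hx
      exact ⟨x, Finset.mem_inter.mpr ⟨hx1, Finset.mem_inter.mpr
        ⟨hx2, Equiv.Perm.mem_cycleFactorsFinset_support_le hc' hx1⟩⟩⟩
    exact hres
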